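/- Let d ≥ 2 be an even integer. Then there exists a set S ⊆ {0,1}^d such that: (1) every x ∈ S has weight exactly d/2, i.e., Σ_{i=1}^d x_i = d/2; (2) any two distinct x, x' ∈ S satisfy Δ_H(x,x') ≥ d/16; and (3) |S| ≥ 2^{d/16}. -/

import Mathlib

open Finset

/-- The weight of a binary word `x : Fin d → Bool` is the number of coordinates equal to 1. -/
def weight {d : ℕ} (x : Fin d → Bool) : ℕ := (Finset.univ.filter fun i => x i = true).card

lemma slice_card (d w : ℕ) :
    ((Finset.univ : Finset (Fin d → Bool)).filter (fun x => weight x = w)).card = d.choose w := by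
  have h := Finset.card_powersetCard w (Finset.univ : Finset (Fin d))
  rw [Finset.card_univ, Fintype.card_fin] at h
  rw [← h]
  apply Finset.card_nbij' (i := fun x => Finset.univ.filter (fun i => x i = true))
    (j := fun s => fun i => decide (i ∈ s))
  · intro x hx
    simp only [Finset.mem_coe, Finset.mem_filter, Finset.mem_univ, true_and] at hx
    simp [Finset.mem_powersetCard, ← hx, weight]
  · intro s hs
    simp only [Finset.mem_coe, Finset.mem_powersetCard] at hs
    simp only [Finset.mem_coe, Finset.mem_filter, Finset.mem_univ, true_and]
    simp only [weight]
    rw [← hs.2]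
    congr 1
    ext i
    simp
  · intro x _
    funext i
    by_cases h : x i = true <;> simp [h]
  · intro s _
    ext i
    simp

lemma two_le_dist {d : ℕ} {x y : Fin d → Bool} (hw : weight x = weight y) (hne : x ≠ y) :
    2 ≤ hammingDist x y := by
  have hdist : hammingDist x y = (Finset.univ.filter fun i => x i ≠ y i).card := rfl
  by_contra hlt
  push_neg at hlt
  interval_cases h : hammingDist x y
  · exact hne (hammingDist_eq_zero.mp h)
  · -- distance 1 : they differ in exactly one coordinate, so weights differ
    obtain ⟨i0, hi0⟩ := Finset.card_eq_one.mp hdist.symm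
    have hmem : ∀ i : Fin d, x i ≠ y i → i = i0 := by
      intro i hi
      have : i ∈ Finset.univ.filter fun i => x i ≠ y i := by simp [hi]
      rw [hi0] at this; simpa using this
    have hxy0 : x i0 ≠ y i0 := by
      have : i0 ∈ Finset.univ.filter fun i => x i ≠ y i := by
        rw [hi0]; exact Finset.mem_singleton_self _
      simpa using this
    have hsum : ∀ z : Fin d → Bool, weight z =
        ∑ i : Fin d, (if z i = true then 1 else 0) := by
      intro z
      rw [weight, Finset.card_filter]
    rw [hsum, hsum] at hw
    rw [← Finset.add_sum_erase _ _ (Finset.mem_univ i0),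
        ← Finset.add_sum_erase _ _ (Finset.mem_univ i0)] at hw
    have heq : ∀ i ∈ Finset.univ.erase i0, (if x i = true then 1 else 0) =
        (if y i = true then 1 else 0) := by
      intro i hi
      have : x i = y i := by
        by_contra hne'
        exact (Finset.mem_erase.mp hi).1 (hmem i hne')
      rw [this]
    rw [Finset.sum_congr rfl heq] at hw
    have h2 : (if x i0 = true then 1 else 0) = (if y i0 = true then 1 else 0) := by omega
    revert hxy0 h2
    cases hx0 : x i0 <;> cases hy0 : y i0 <;> simp

lemma ball_card_le (d k : ℕ) (t : Fin d → Bool) :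
    ((Finset.univ : Finset (Fin d → Bool)).filter fun a => hammingDist a t ≤ k).card ≤
      ∑ i ∈ Finset.range (k + 1), d.choose i := by
  classical
  have h1 : ((Finset.univ : Finset (Fin d → Bool)).filter fun a => hammingDist a t ≤ k).card ≤
      ((Finset.range (k + 1)).biUnion fun i =>
        Finset.powersetCard i (Finset.univ : Finset (Fin d))).card := by
    apply Finset.card_le_card_of_injOn (fun a => Finset.univ.filter fun i => a i ≠ t i)
    · intro a ha
      simp only [Finset.mem_coe, Finset.mem_filter, Finset.mem_univ, true_and] at ha
      simp only [Finset.mem_coe, Finset.mem_biUnion, Finset.mem_range, Finset.mem_powersetCard]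
      exact ⟨(Finset.univ.filter fun i => a i ≠ t i).card, by
        have : hammingDist a t = (Finset.univ.filter fun i => a i ≠ t i).card := rfl
        omega, Finset.subset_univ _, rfl⟩
    · intro a _ a' _ h
      change Finset.filter (fun i => a i ≠ t i) Finset.univ
        = Finset.filter (fun i => a' i ≠ t i) Finset.univ at h
      funext i
      have : (a i ≠ t i) ↔ (a' i ≠ t i) := by
        constructor
        · intro hi
          have : i ∈ Finset.univ.filter fun j => a j ≠ t j := by simp [hi]
          rw [h] at this; simpa using this
        · intro hi
          have : i ∈ Finset.univ.filter fun j => a' j ≠ t j := by simp [hi]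
          rw [← h] at this; simpa using this
      cases hai : a i <;> cases hati : a' i <;> cases hti : t i <;> simp_all
  refine h1.trans ((Finset.card_biUnion_le).trans ?_)
  apply Finset.sum_le_sum
  intro i _
  rw [Finset.card_powersetCard, Finset.card_univ, Fintype.card_fin]

lemma sum_choose_le (d k : ℕ) (hk : k ≤ d) :
    (∑ i ∈ Finset.range (k + 1), d.choose i) * 15 ^ (d - k) ≤ 16 ^ d := by
  have h16 : (16 : ℕ) ^ d = ∑ i ∈ Finset.range (d + 1), d.choose i * 15 ^ (d - i) := by
    have h := add_pow (1 : ℕ) 15 d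
    norm_num at h
    rw [h]
    apply Finset.sum_congr rfl
    intro i _
    ring
  rw [h16]
  calc (∑ i ∈ Finset.range (k + 1), d.choose i) * 15 ^ (d - k)
      = ∑ i ∈ Finset.range (k + 1), d.choose i * 15 ^ (d - k) := by rw [Finset.sum_mul]
    _ ≤ ∑ i ∈ Finset.range (k + 1), d.choose i * 15 ^ (d - i) := by
        apply Finset.sum_le_sum
        intro i hi
        apply Nat.mul_le_mul_left
        apply Nat.pow_le_pow_right (by norm_num)
        simp only [Finset.mem_range] at hi
        omega
    _ ≤ ∑ i ∈ Finset.range (d + 1), d.choose i * 15 ^ (d - i) := by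
        apply Finset.sum_le_sum_of_subset
        intro x hx
        simp only [Finset.mem_range] at hx ⊢
        omega

lemma num1 : ∀ d : ℕ, 33 ≤ d → 2 ^ (64 * d + 16) * d ^ 16 ≤ 30 ^ (15 * d + 1) := by
  intro d hd
  induction d with
  | zero => omega
  | succ n ih =>
    rcases Nat.lt_or_ge n 33 with hn | hn
    · have hn' : n = 32 := by omega
      subst hn'
      decide +kernel
    · have ihn := ih hn
      have key : 2 ^ 64 * 33 ^ 16 * (n + 1) ^ 16 ≤ 30 ^ 15 * 33 ^ 16 * n ^ 16 := by
        have h1 : 33 * (n + 1) ≤ 34 * n := by omega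
        have h2 : (33 * (n + 1)) ^ 16 ≤ (34 * n) ^ 16 := Nat.pow_le_pow_left h1 16
        have h3 : 33 ^ 16 * (n + 1) ^ 16 ≤ 34 ^ 16 * n ^ 16 := by
          rw [← Nat.mul_pow, ← Nat.mul_pow]; exact h2
        calc 2 ^ 64 * 33 ^ 16 * (n + 1) ^ 16 = 2 ^ 64 * (33 ^ 16 * (n + 1) ^ 16) := by ring
          _ ≤ 2 ^ 64 * (34 ^ 16 * n ^ 16) := Nat.mul_le_mul_left _ h3
          _ = (2 ^ 64 * 34 ^ 16) * n ^ 16 := by ring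
          _ ≤ (30 ^ 15 * 33 ^ 16) * n ^ 16 := by
              apply Nat.mul_le_mul_right
              norm_num
          _ = 30 ^ 15 * 33 ^ 16 * n ^ 16 := by ring
      have key' : 2 ^ 64 * (n + 1) ^ 16 ≤ 30 ^ 15 * n ^ 16 := by
        have h33 : 0 < (33 : ℕ) ^ 16 := by positivity
        have := key
        nlinarith [pow_pos (show 0 < 33 by norm_num) 16]
      calc 2 ^ (64 * (n + 1) + 16) * (n + 1) ^ 16
          = 2 ^ 64 * (n + 1) ^ 16 * 2 ^ (64 * n + 16) := by ring
        _ ≤ 30 ^ 15 * n ^ 16 * 2 ^ (64 * n + 16) := Nat.mul_le_mul_right _ key'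
        _ = 30 ^ 15 * (2 ^ (64 * n + 16) * n ^ 16) := by ring
        _ ≤ 30 ^ 15 * 30 ^ (15 * n + 1) := Nat.mul_le_mul_left _ ihn
        _ = 30 ^ (15 * (n + 1) + 1) := by rw [← pow_add]; ring_nf

lemma num2 (d : ℕ) (hd : 33 ≤ d) :
    2 ^ ((d - 1) / 16 + 1) * (d * 16 ^ d) ≤ 2 ^ d * 15 ^ (d - (d - 1) / 16) := by
  set k := (d - 1) / 16 with hk
  set e := d - k with he
  have hke : k + e = d := by omega
  have h16e : 15 * d + 1 ≤ 16 * e := by omega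
  have key : 2 ^ (4 * d + 1) * d ≤ 30 ^ e := by
    rw [← Nat.pow_le_pow_iff_left (show 16 ≠ 0 by norm_num)]
    calc (2 ^ (4 * d + 1) * d) ^ 16 = 2 ^ (64 * d + 16) * d ^ 16 := by
          rw [Nat.mul_pow, ← pow_mul]; ring_nf
      _ ≤ 30 ^ (15 * d + 1) := num1 d hd
      _ ≤ 30 ^ (16 * e) := Nat.pow_le_pow_right (by norm_num) h16e
      _ = (30 ^ e) ^ 16 := by rw [← pow_mul]; ring_nf
  calc 2 ^ (k + 1) * (d * 16 ^ d) = 2 ^ k * (2 ^ (4 * d + 1) * d) := by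
        rw [show (16:ℕ) = 2 ^ 4 by norm_num, ← pow_mul]
        ring
    _ ≤ 2 ^ k * 30 ^ e := Nat.mul_le_mul_left _ key
    _ = 2 ^ d * 15 ^ e := by
        rw [show (30:ℕ) = 2 * 15 by norm_num, Nat.mul_pow, ← hke, pow_add]
        ring

lemma rpow_le_of_nat {d c n : ℕ} (h1 : d ≤ 16 * c) (h2 : 2 ^ c ≤ n) :
    (2 : ℝ) ^ ((d : ℝ) / 16) ≤ (n : ℝ) := by
  have hdc : (d : ℝ) / 16 ≤ (c : ℝ) := by
    rw [div_le_iff₀ (by norm_num : (0:ℝ) < 16)]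
    exact_mod_cast (by omega : d ≤ c * 16)
  calc (2 : ℝ) ^ ((d : ℝ) / 16) ≤ (2 : ℝ) ^ ((c : ℕ) : ℝ) :=
        Real.rpow_le_rpow_of_exponent_le one_le_two hdc
    _ = ((2 ^ c : ℕ) : ℝ) := by rw [Real.rpow_natCast]; push_cast; ring
    _ ≤ (n : ℝ) := Nat.cast_le.mpr h2

/-- For every even `d ≥ 2` there is a set `S ⊆ {0,1}^d` of words of weight exactly `d/2`,
with pairwise Hamming distance at least `d/16`, of size at least `2^{d/16}`. -/
theorem stmt_1 (d : ℕ) (hd : 2 ≤ d) (hde : Even d) :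
    ∃ S : Finset (Fin d → Bool),
      (∀ x ∈ S, weight x = d / 2) ∧
      (∀ x ∈ S, ∀ x' ∈ S, x ≠ x' → (d : ℝ) / 16 ≤ (hammingDist x x' : ℝ)) ∧
      ((2 : ℝ) ^ ((d : ℝ) / 16) ≤ (S.card : ℝ)) := by
  classical
  set A : Finset (Fin d → Bool) :=
    (Finset.univ.filter (fun x => weight x = d / 2)) with hAdef
  have hA : A.card = d.choose (d / 2) := slice_card d (d / 2)
  have hwA : ∀ x ∈ A, weight x = d / 2 := by
    intro x hx
    simpa [hAdef] using hx
  rcases Nat.lt_or_ge d 33 with hsmall | hbig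
  · -- small case : any min(4, |A|) words of the slice work
    have hAd : d ≤ A.card := by
      rw [hA]
      calc d = d.choose 1 := (Nat.choose_one_right d).symm
        _ ≤ d.choose (d / 2) := Nat.choose_le_middle 1 d
    obtain ⟨S, hSA, hScard⟩ := Finset.exists_subset_card_eq
      (min_le_right 4 A.card : min 4 A.card ≤ A.card)
    refine ⟨S, fun x hx => hwA x (hSA hx), ?_, ?_⟩
    · intro x hx x' hx' hne
      have h2 : 2 ≤ hammingDist x x' :=
        two_le_dist ((hwA x (hSA hx)).trans (hwA x' (hSA hx')).symm) hne
      have : (d : ℝ) / 16 ≤ 2 := by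
        rw [div_le_iff₀ (by norm_num : (0:ℝ) < 16)]
        exact_mod_cast (by omega : d ≤ 32)
      exact this.trans (by exact_mod_cast h2)
    · rw [hScard]
      rcases Nat.lt_or_ge d 17 with h16 | h16
      · exact rpow_le_of_nat (c := 1) (by omega) (by omega)
      · exact rpow_le_of_nat (c := 2) (by omega) (by omega)
  · -- large case : greedy Gilbert–Varshamov construction
    set r : ℕ := (d + 15) / 16 with hrdef
    set k : ℕ := (d - 1) / 16 with hkdef
    have hrk : k + 1 = r := by omega
    have hkd : k ≤ d := by omega
    set V : ℕ := ∑ i ∈ Finset.range (k + 1), d.choose i with hVdef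
    -- lower bound on the slice
    have hAlb : 2 ^ d ≤ d * A.card := by
      have h4 := Nat.four_pow_le_two_mul_self_mul_centralBinom (d / 2) (by omega)
      have hcb : Nat.centralBinom (d / 2) = d.choose (d / 2) := by
        rw [Nat.centralBinom]
        congr 1
        have := Nat.even_iff.mp hde
        omega
      rw [hcb] at h4
      have h2d : 2 * (d / 2) = d := by
        have := Nat.even_iff.mp hde
        omega
      calc 2 ^ d = 4 ^ (d / 2) := by
            rw [show (4:ℕ) = 2 ^ 2 by norm_num, ← pow_mul, h2d]
        _ ≤ 2 * (d / 2) * d.choose (d / 2) := h4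
        _ = d * A.card := by rw [h2d, hA]
    -- pick a maximal code
    set P : Finset (Fin d → Bool) → Prop :=
      fun T => ∀ x ∈ T, ∀ y ∈ T, x ≠ y → r ≤ hammingDist x y with hPdef
    set F : Finset (Finset (Fin d → Bool)) := A.powerset.filter P with hFdef
    have hF0 : (∅ : Finset (Fin d → Bool)) ∈ F := by
      simp [hFdef, hPdef]
    obtain ⟨T, hTF, hTmax⟩ := F.exists_max_image Finset.card ⟨∅, hF0⟩
    rw [hFdef, Finset.mem_filter, Finset.mem_powerset] at hTF
    obtain ⟨hTA, hTP⟩ := hTF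
    -- the maximal code covers the slice with radius-k balls
    have hcover : ∀ a ∈ A, ∃ t ∈ T, hammingDist a t ≤ k := by
      intro a ha
      by_contra hc
      push_neg at hc
      have hc' : ∀ t ∈ T, r ≤ hammingDist a t := by
        intro t ht
        have := hc t ht
        omega
      have haT : a ∉ T := by
        intro haT
        have := hc' a haT
        rw [hammingDist_self] at this
        omega
      have hins : insert a T ∈ F := by
        rw [hFdef, Finset.mem_filter, Finset.mem_powerset]
        constructor
        · exact Finset.insert_subset ha hTA
        · intro x hx y hy hxy
          rcases Finset.mem_insert.mp hx with rfl | hx'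
          · rcases Finset.mem_insert.mp hy with rfl | hy'
            · exact absurd rfl hxy
            · exact hc' y hy'
          · rcases Finset.mem_insert.mp hy with rfl | hy'
            · rw [hammingDist_comm]; exact hc' x hx'
            · exact hTP x hx' y hy' hxy
      have := hTmax _ hins
      rw [Finset.card_insert_of_notMem haT] at this
      omega
    -- counting
    have hAub : A.card ≤ T.card * V := by
      have hsub : A ⊆ T.biUnion fun t =>
          (Finset.univ.filter fun a => hammingDist a t ≤ k) := by
        intro a ha
        obtain ⟨t, ht, hdist⟩ := hcover a ha
        exact Finset.mem_biUnion.mpr ⟨t, ht, by simp [hdist]⟩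
      calc A.card ≤ (T.biUnion fun t =>
            (Finset.univ.filter fun a => hammingDist a t ≤ k)).card :=
            Finset.card_le_card hsub
        _ ≤ ∑ t ∈ T, (Finset.univ.filter fun a => hammingDist a t ≤ k).card :=
            Finset.card_biUnion_le
        _ ≤ ∑ _t ∈ T, V := Finset.sum_le_sum fun t _ => ball_card_le d k t
        _ = T.card * V := by rw [Finset.sum_const, smul_eq_mul]
    -- combine the counting and numeric bounds
    have hchain : 2 ^ (k + 1) * (d * 16 ^ d) ≤ T.card * (d * 16 ^ d) := by
      calc 2 ^ (k + 1) * (d * 16 ^ d) ≤ 2 ^ d * 15 ^ (d - k) := by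
            have := num2 d hbig
            rw [← hkdef] at this
            exact this
        _ ≤ d * A.card * 15 ^ (d - k) := Nat.mul_le_mul_right _ hAlb
        _ ≤ d * (T.card * V) * 15 ^ (d - k) :=
            Nat.mul_le_mul_right _ (Nat.mul_le_mul_left _ hAub)
        _ = (d * T.card) * (V * 15 ^ (d - k)) := by ring
        _ ≤ (d * T.card) * 16 ^ d := Nat.mul_le_mul_left _ (sum_choose_le d k hkd)
        _ = T.card * (d * 16 ^ d) := by ring
    have hTcard : 2 ^ (k + 1) ≤ T.card :=
      Nat.le_of_mul_le_mul_right
        (by rwa [Nat.mul_comm (2 ^ (k+1)) _, Nat.mul_comm T.card _] at hchain)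
        (by positivity)
    refine ⟨T, fun x hx => hwA x (hTA hx), ?_, ?_⟩
    · intro x hx x' hx' hne
      have hr : r ≤ hammingDist x x' := hTP x hx x' hx' hne
      have : (d : ℝ) / 16 ≤ (r : ℝ) := by
        rw [div_le_iff₀ (by norm_num : (0:ℝ) < 16)]
        exact_mod_cast (by omega : d ≤ r * 16)
      exact this.trans (by exact_mod_cast hr)
    · exact rpow_le_of_nat (c := k + 1) (by omega) hTcard
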